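/- For all n ≥ 1 and k ≥ 1, the following identity holds in ℤ[x_1,…,x_k,t]: W̃_n(x,t) = Σ_{σ ∈ S_n} t^{cdes(σ)} F_{n, [n−1]∖Des_{≥2}(σ^{−1})}(x_1,…,x_k), where W̃_n(x,t) := Σ_w t^{cdes(w)} x_w, the sum over all Smirnov words w of length n over [k]. (This is the expansion ω W̃_n = Σ_{σ∈S_n} t^{cdes(σ)} F_{n,Des_{≥2}(σ^{−1})}, rewritten without the involution ω using ω F_{n,S} = F_{n,[n−1]∖S}.) -/

import Mathlib

open Finset MvPolynomial Polynomial

attribute [local instance] Classical.propDecidable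

noncomputable section

/-- The descent number of a word `w = w₁⋯wₙ` over the alphabet `[k]`:
the number of indices `i ∈ [n-1]` with `wᵢ > wᵢ₊₁`. -/
def desc {n k : ℕ} (w : Fin n → Fin k) : ℕ :=
  (Finset.univ.filter fun i : Fin n =>
    ∃ h : (i : ℕ) + 1 < n, w ⟨(i : ℕ) + 1, h⟩ < w i).card

/-- The cyclic descent number: the number of indices `i ∈ [n]` with `wᵢ > wᵢ₊₁`,
where `wₙ₊₁ := w₁`. -/
def cdesc {n k : ℕ} (w : Fin n → Fin k) : ℕ :=
  (Finset.univ.filter fun i : Fin n =>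
    w ⟨((i : ℕ) + 1) % n, Nat.mod_lt _ i.pos⟩ < w i).card

/-- A word is Smirnov if no two adjacent letters are equal. -/
def IsSmirnov {n k : ℕ} (w : Fin n → Fin k) : Prop :=
  ∀ i : Fin n, ∀ h : (i : ℕ) + 1 < n, w ⟨(i : ℕ) + 1, h⟩ ≠ w i

/-- the first letter is strictly smaller than the last letter -/
def FirstLtLast {n k : ℕ} (w : Fin n → Fin k) : Prop :=
  ∃ h : 0 < n, w ⟨0, h⟩ < w ⟨n - 1, Nat.sub_lt h Nat.one_pos⟩

/-- the first letter is strictly larger than the last letter -/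
def FirstGtLast {n k : ℕ} (w : Fin n → Fin k) : Prop :=
  ∃ h : 0 < n, w ⟨n - 1, Nat.sub_lt h Nat.one_pos⟩ < w ⟨0, h⟩

/-- the first letter equals the last letter -/
def FirstEqLast {n k : ℕ} (w : Fin n → Fin k) : Prop :=
  ∃ h : 0 < n, w ⟨0, h⟩ = w ⟨n - 1, Nat.sub_lt h Nat.one_pos⟩

/-- the first letter differs from the last letter -/
def FirstNeLast {n k : ℕ} (w : Fin n → Fin k) : Prop :=
  ∃ h : 0 < n, w ⟨0, h⟩ ≠ w ⟨n - 1, Nat.sub_lt h Nat.one_pos⟩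

/-- the monomial `x_w = x_{w₁}⋯x_{wₙ}` -/
def xw (R : Type) [CommRing R] {n k : ℕ} (w : Fin n → Fin k) : MvPolynomial (Fin k) R :=
  ∏ i, MvPolynomial.X (w i)

/-- Generic restricted Smirnov word enumerator: the sum of `t^(stat w) · x_w` over all
Smirnov words `w` of length `n` over `[k]` satisfying `P`, as a polynomial in `t`
with coefficients in `R[x₁,…,x_k]`. -/
def smirnovEnum (R : Type) [CommRing R] (n k : ℕ) (stat : (Fin n → Fin k) → ℕ)
    (P : (Fin n → Fin k) → Prop) : Polynomial (MvPolynomial (Fin k) R) :=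
  ∑ w ∈ Finset.univ.filter (fun w : Fin n → Fin k => IsSmirnov w ∧ P w),
    Polynomial.X ^ stat w * Polynomial.C (xw R w)

/-- `Des_{≥2}(σ) = {i ∈ [n-1] : σ(i) - σ(i+1) ≥ 2}`, recorded via 0-based gap positions:
gap `g ∈ {0,…,n-2}` corresponds to the adjacent pair `(σ g, σ (g+1))`. -/
def Des2 {n : ℕ} (σ : Equiv.Perm (Fin n)) : Finset ℕ :=
  (Finset.range n).filter fun g =>
    ∃ h : g + 1 < n, (σ ⟨g + 1, h⟩ : ℕ) + 2 ≤ (σ ⟨g, Nat.lt_of_succ_lt h⟩ : ℕ)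

/-- `Asc_{≥2}(σ) = {i ∈ [n-1] : σ(i+1) - σ(i) ≥ 2}`, recorded via 0-based gap positions. -/
def Asc2 {n : ℕ} (σ : Equiv.Perm (Fin n)) : Finset ℕ :=
  (Finset.range n).filter fun g =>
    ∃ h : g + 1 < n, (σ ⟨g, Nat.lt_of_succ_lt h⟩ : ℕ) + 2 ≤ (σ ⟨g + 1, h⟩ : ℕ)

/-- `maj_{≥2}(σ) = Σ i` over the (1-based) positions `i ∈ [n-1]` with `σ(i+1) - σ(i) ≥ 2`;
a 0-based gap `g` corresponds to the 1-based position `g + 1`. -/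
def maj2 {n : ℕ} (σ : Equiv.Perm (Fin n)) : ℕ :=
  ∑ g ∈ Asc2 σ, (g + 1)

/-- The Eulerian polynomial `A_m(t) = Σ_{σ ∈ S_m} t^{des σ}`. -/
def Eul (R : Type) [CommRing R] (m : ℕ) : Polynomial R :=
  ∑ σ : Equiv.Perm (Fin m), Polynomial.X ^ desc ⇑σ

/-- The fundamental quasisymmetric polynomial `F_{n,S}(x₁,…,x_k)`: the sum of
`x_{f(1)}⋯x_{f(n)}` over weakly decreasing `f : [n] → [k]` which strictly decrease at the
positions of `S`; positions are 0-based gaps `g ∈ {0,…,n-2}`, gap `g` lying between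
`f g` and `f (g+1)`. -/
def FQ (R : Type) [CommRing R] (k n : ℕ) (S : Finset ℕ) : MvPolynomial (Fin k) R :=
  ∑ f ∈ Finset.univ.filter (fun f : Fin n → Fin k =>
      (∀ i : Fin n, ∀ h : (i : ℕ) + 1 < n, f ⟨(i : ℕ) + 1, h⟩ ≤ f i) ∧
      (∀ i : Fin n, ∀ h : (i : ℕ) + 1 < n, (i : ℕ) ∈ S → f ⟨(i : ℕ) + 1, h⟩ < f i)),
    ∏ i, MvPolynomial.X (f i)

/-- the full set `[n-1]` of gap positions, 0-based -/
def gapSet (n : ℕ) : Finset ℕ := Finset.range (n - 1)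


namespace SmirnovAux


variable {n k : ℕ}

/-- reversal of positions -/
def rv (n : ℕ) (i : Fin n) : Fin n := ⟨n - 1 - (i : ℕ), by have := i.2; omega⟩

lemma rv_rv (i : Fin n) : rv n (rv n i) = i := by
  have := i.2; simp only [rv]; ext; simp; omega

/-- cyclic successor -/
def sc (i : Fin n) : Fin n := ⟨((i : ℕ) + 1) % n, Nat.mod_lt _ i.pos⟩

lemma sc_val (i : Fin n) :
    ((sc i : ℕ) = (i : ℕ) + 1 ∧ (i : ℕ) + 1 < n) ∨ ((sc i : ℕ) = 0 ∧ (i : ℕ) + 1 = n) := by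
  have := i.2
  rcases lt_or_ge ((i : ℕ) + 1) n with h | h
  · exact Or.inl ⟨by simp [sc, Nat.mod_eq_of_lt h], h⟩
  · have : (i : ℕ) + 1 = n := by omega
    exact Or.inr ⟨by simp [sc, this], this⟩

lemma sc_rv_sc (i : Fin n) : sc (rv n (sc i)) = rv n i := by
  have h2 := i.2
  rcases sc_val i with ⟨h, h'⟩ | ⟨h, h'⟩ <;>
  · rcases sc_val (rv n (sc i)) with ⟨g, g'⟩ | ⟨g, g'⟩ <;>
    · ext; simp only [rv] at *; omega

lemma sc_injective : Function.Injective (sc (n := n)) := by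
  intro i j hij
  have hi := i.2; have hj := j.2
  have : ((sc i : ℕ)) = ((sc j : ℕ)) := by rw [hij]
  ext
  rcases sc_val i with ⟨h, h'⟩ | ⟨h, h'⟩ <;> rcases sc_val j with ⟨g, g'⟩ | ⟨g, g'⟩ <;> omega

lemma rv_injective : Function.Injective (rv n : Fin n → Fin n) := by
  intro i j hij
  have hi := i.2; have hj := j.2
  have : ((rv n i : ℕ)) = ((rv n j : ℕ)) := by rw [hij]
  simp only [rv] at this
  ext; omega



variable {n k : ℕ}

def key (k : ℕ) (u : Fin n → Fin k) (j : Fin n) : ℕ :=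
  (k - 1 - (u j : ℕ)) * n + (n - 1 - (j : ℕ))

lemma lexlt {a b c d m : ℕ} (hb : b < m) (hd : d < m) :
    a * m + b < c * m + d ↔ (a < c ∨ (a = c ∧ b < d)) := by
  constructor
  · intro h
    rcases lt_trichotomy a c with h1 | h1 | h1
    · exact Or.inl h1
    · exact Or.inr ⟨h1, by subst h1; omega⟩
    · exfalso
      have : (c + 1) * m ≤ a * m := Nat.mul_le_mul_right m (by omega)
      have : c * m + d < a * m := by
        calc c * m + d < c * m + m := by omega
        _ = (c + 1) * m := by ring
        _ ≤ a * m := this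
      omega
  · rintro (h1 | ⟨h1, h2⟩)
    · have : (a + 1) * m ≤ c * m := Nat.mul_le_mul_right m (by omega)
      calc a * m + b < a * m + m := by omega
      _ = (a + 1) * m := by ring
      _ ≤ c * m := this
      _ ≤ c * m + d := by omega
    · subst h1; omega

lemma key_lt_iff (u : Fin n → Fin k) (i j : Fin n) :
    key k u j < key k u i ↔ (u i < u j ∨ (u i = u j ∧ i < j)) := by
  have h1 : (u i : ℕ) < k := (u i).2
  have h2 : (u j : ℕ) < k := (u j).2
  have h3 : (i : ℕ) < n := i.2
  have h4 : (j : ℕ) < n := j.2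
  unfold key
  rw [lexlt (by omega) (by omega), Fin.lt_def, Fin.lt_def, Fin.ext_iff]
  omega

lemma key_injective (u : Fin n → Fin k) : Function.Injective (key k u) := by
  intro i j hij
  have h1 := key_lt_iff u i j
  have h2 := key_lt_iff u j i
  rw [Fin.lt_def, Fin.lt_def, Fin.ext_iff] at h1 h2
  rw [Fin.ext_iff]
  rw [hij] at h1
  -- now: ¬ (key .. j < key .. j) irrefl gives info? use both
  have e1 : ¬ ((u i : ℕ) < (u j : ℕ) ∨ ((u i : ℕ) = (u j : ℕ) ∧ (i : ℕ) < (j : ℕ))) := by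
    rw [← h1]; omega
  have e2 : ¬ ((u j : ℕ) < (u i : ℕ) ∨ ((u j : ℕ) = (u i : ℕ) ∧ (j : ℕ) < (i : ℕ))) := by
    rw [← h2, hij]; omega
  omega

/-- standardization: rank of position `i` in the key order -/
def stdF (u : Fin n → Fin k) : Fin n → Fin n := fun i =>
  ⟨(univ.filter fun j => key k u j < key k u i).card, by
    have hsub : (univ.filter fun j => key k u j < key k u i) ⊆ univ.erase i := by
      intro j hj
      rw [mem_filter] at hj
      rw [mem_erase]
      exact ⟨fun h => by simp [h] at hj, mem_univ _⟩
    have := Finset.card_le_card hsub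
    rw [Finset.card_erase_of_mem (mem_univ _), Finset.card_univ, Fintype.card_fin] at this
    have := i.pos
    omega⟩

lemma stdF_lt_of_key_lt (u : Fin n → Fin k) {i j : Fin n} (h : key k u j < key k u i) :
    stdF u j < stdF u i := by
  rw [Fin.lt_def]
  show (univ.filter fun x => key k u x < key k u j).card <
    (univ.filter fun x => key k u x < key k u i).card
  apply Finset.card_lt_card
  constructor
  · intro x hx
    rw [mem_filter] at hx ⊢
    exact ⟨mem_univ _, hx.2.trans h⟩
  · intro hsub
    have : j ∈ (univ.filter fun x => key k u x < key k u i) := by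
      rw [mem_filter]; exact ⟨mem_univ _, h⟩
    have := hsub this
    rw [mem_filter] at this
    omega

lemma stdF_lt_iff (u : Fin n → Fin k) (i j : Fin n) :
    stdF u j < stdF u i ↔ key k u j < key k u i := by
  constructor
  · intro h
    rcases lt_trichotomy (key k u j) (key k u i) with h1 | h1 | h1
    · exact h1
    · exact absurd (key_injective u h1) (by rintro rfl; exact lt_irrefl _ h)
    · exact absurd (stdF_lt_of_key_lt u h1) (by omega)
  · exact stdF_lt_of_key_lt u

lemma stdF_bijective (u : Fin n → Fin k) : Function.Bijective (stdF u) := by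
  rw [Fintype.bijective_iff_injective_and_card]
  refine ⟨fun i j hij => ?_, rfl⟩
  by_contra hne
  rcases lt_trichotomy (key k u i) (key k u j) with h | h | h
  · have := stdF_lt_of_key_lt u h; rw [hij] at this; exact lt_irrefl _ this
  · exact hne (key_injective u h)
  · have := stdF_lt_of_key_lt u h; rw [hij] at this; exact lt_irrefl _ this

/-- standardization as a permutation -/
def stdE (u : Fin n → Fin k) : Equiv.Perm (Fin n) := Equiv.ofBijective _ (stdF_bijective u)

lemma stdE_apply (u : Fin n → Fin k) (i : Fin n) : stdE u i = stdF u i := rfl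

lemma stdE_eq_of (u : Fin n → Fin k) (σ : Equiv.Perm (Fin n))
    (h : ∀ i j, key k u j < key k u i ↔ σ j < σ i) : stdE u = σ := by
  apply Equiv.ext
  intro i
  rw [stdE_apply]
  ext
  show (univ.filter fun j => key k u j < key k u i).card = _
  have : (univ.filter fun j => key k u j < key k u i) = (univ.filter fun j => σ j < σ i) := by
    apply Finset.filter_congr
    intro j _
    exact h i j
  rw [this]
  have hcard : (univ.filter fun j => σ j < σ i).card = (Finset.Iio (σ i)).card := by
    apply Finset.card_nbij (fun j => σ j)
    · intro a ha; rw [Finset.mem_coe, mem_filter] at ha; rw [Finset.mem_coe, Finset.mem_Iio]; exact ha.2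
    · intro a b ha hb hab; exact σ.injective hab
    · intro b hb
      rw [Finset.mem_coe, Finset.mem_Iio] at hb
      exact ⟨σ.symm b, by rw [Finset.mem_coe, mem_filter]; simp [hb], by simp⟩
  rw [hcard, Fin.card_Iio]


variable {n k : ℕ}

/-- weak decrease chain -/
lemma WDchain {f : Fin n → Fin k}
    (h1 : ∀ i : Fin n, ∀ h : (i : ℕ) + 1 < n, f ⟨(i : ℕ) + 1, h⟩ ≤ f i)
    (a b : Fin n) (hab : (a : ℕ) ≤ (b : ℕ)) : f b ≤ f a := by
  have key : ∀ d : ℕ, ∀ b : Fin n, (b : ℕ) = (a : ℕ) + d → f b ≤ f a := by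
    intro d
    induction d with
    | zero => intro b hb; have : b = a := by ext; omega
              rw [this]
    | succ d ih =>
      intro b hb
      have hb2 := b.2
      have hmid : (a : ℕ) + d < n := by omega
      set mid : Fin n := ⟨(a : ℕ) + d, hmid⟩ with hmiddef
      have step : f b ≤ f mid := by
        have := h1 mid (by simp only [hmiddef]; omega)
        convert this using 2
        ext; simp [hmiddef]; omega
      exact step.trans (ih mid rfl)
  obtain ⟨d, hd⟩ := Nat.exists_eq_add_of_le hab
  exact key d b hd

/-- single step: equality at a gap forces the gap to be in `Des2 σ⁻¹` -/
lemma step2 {σ : Equiv.Perm (Fin n)} {f : Fin n → Fin k}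
    (h2 : ∀ i : Fin n, ∀ h : (i : ℕ) + 1 < n,
      (i : ℕ) ∈ gapSet n \ Des2 σ⁻¹ → f ⟨(i : ℕ) + 1, h⟩ < f i)
    (a b : Fin n) (hs : (b : ℕ) = (a : ℕ) + 1) (hfe : f b = f a) :
    ((σ⁻¹ b : ℕ)) + 2 ≤ ((σ⁻¹ a : ℕ)) := by
  have hb2 := b.2
  have hg : (a : ℕ) + 1 < n := by omega
  have hmem : (a : ℕ) ∈ Des2 σ⁻¹ := by
    by_contra hnot
    have hgap : (a : ℕ) ∈ gapSet n := by rw [gapSet, Finset.mem_range]; omega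
    have hlt := h2 a hg (by rw [Finset.mem_sdiff]; exact ⟨hgap, hnot⟩)
    have heq : f ⟨(a : ℕ) + 1, hg⟩ = f b := congrArg f (by ext; simp; omega)
    rw [heq, hfe] at hlt
    exact lt_irrefl _ hlt
  rw [Des2, Finset.mem_filter] at hmem
  obtain ⟨-, h', hle⟩ := hmem
  have e1 : (⟨(a : ℕ) + 1, h'⟩ : Fin n) = b := by ext; simp; omega
  rw [e1] at hle
  simp only [Fin.eta] at hle
  exact hle

/-- chain: equal values of `f` at ranks `a < b` force positions to decrease by ≥ 2 -/
lemma chain2 {σ : Equiv.Perm (Fin n)} {f : Fin n → Fin k}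
    (h1 : ∀ i : Fin n, ∀ h : (i : ℕ) + 1 < n, f ⟨(i : ℕ) + 1, h⟩ ≤ f i)
    (h2 : ∀ i : Fin n, ∀ h : (i : ℕ) + 1 < n,
      (i : ℕ) ∈ gapSet n \ Des2 σ⁻¹ → f ⟨(i : ℕ) + 1, h⟩ < f i)
    (a b : Fin n) (hab : a < b) (hfe : f a = f b) :
    ((σ⁻¹ b : ℕ)) + 2 ≤ ((σ⁻¹ a : ℕ)) := by
  rw [Fin.lt_def] at hab
  have key : ∀ d : ℕ, ∀ b : Fin n, (b : ℕ) = (a : ℕ) + 1 + d → f a = f b →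
      ((σ⁻¹ b : ℕ)) + 2 ≤ ((σ⁻¹ a : ℕ)) := by
    intro d
    induction d with
    | zero =>
      intro b hb hfe
      exact step2 h2 a b (by omega) hfe.symm
    | succ d ih =>
      intro b hb hfe
      have hb2 := b.2
      have hmidlt : (a : ℕ) + 1 + d < n := by omega
      set mid : Fin n := ⟨(a : ℕ) + 1 + d, hmidlt⟩ with hmiddef
      have l1 : f mid ≤ f a := WDchain h1 a mid (by show (a : ℕ) ≤ (a : ℕ) + 1 + d; omega)
      have l2 : f b ≤ f mid := WDchain h1 mid b (by show (a : ℕ) + 1 + d ≤ (b : ℕ); omega)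
      have l2' : f a ≤ f mid := by rw [hfe]; exact l2
      have hfm : f a = f mid := le_antisymm l2' l1
      have hIH := ih mid rfl hfm
      have hfbm : f b = f mid := by rw [← hfe, hfm]
      have hstep := step2 h2 mid b (by show (b : ℕ) = (a : ℕ) + 1 + d + 1; omega) hfbm
      omega
  obtain ⟨d, hd⟩ := Nat.exists_eq_add_of_le hab
  exact key d b (by omega) hfe


/-- the word associated to a pair `(σ, f)` : `w i = f (σ (rev i))` -/
def wOf (σ : Equiv.Perm (Fin n)) (f : Fin n → Fin k) : Fin n → Fin k :=
  fun i => f (σ (rv n i))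

lemma wOf_rv (σ : Equiv.Perm (Fin n)) (f : Fin n → Fin k) (j : Fin n) :
    wOf σ f (rv n j) = f (σ j) := by
  rw [wOf, rv_rv]

lemma smirnov_wOf {σ : Equiv.Perm (Fin n)} {f : Fin n → Fin k}
    (h1 : ∀ i : Fin n, ∀ h : (i : ℕ) + 1 < n, f ⟨(i : ℕ) + 1, h⟩ ≤ f i)
    (h2 : ∀ i : Fin n, ∀ h : (i : ℕ) + 1 < n,
      (i : ℕ) ∈ gapSet n \ Des2 σ⁻¹ → f ⟨(i : ℕ) + 1, h⟩ < f i) :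
    IsSmirnov (wOf σ f) := by
  intro i hlt heq
  set p : Fin n := rv n ⟨(i : ℕ) + 1, hlt⟩ with hp
  set q : Fin n := rv n i with hq
  have hi2 := i.2
  have hpq : (q : ℕ) = (p : ℕ) + 1 := by simp [hp, hq, rv]; omega
  have heq' : f (σ p) = f (σ q) := heq
  rcases lt_trichotomy (σ p) (σ q) with hc | hc | hc
  · have := chain2 h1 h2 (σ p) (σ q) hc heq'
    rw [Equiv.Perm.coe_inv, Equiv.symm_apply_apply, Equiv.symm_apply_apply] at this
    omega
  · have : p = q := σ.injective hc
    rw [this] at hpq; omega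
  · have := chain2 h1 h2 (σ q) (σ p) hc heq'.symm
    rw [Equiv.Perm.coe_inv, Equiv.symm_apply_apply, Equiv.symm_apply_apply] at this
    omega

lemma cdesc_wOf {σ : Equiv.Perm (Fin n)} {f : Fin n → Fin k}
    (h1 : ∀ i : Fin n, ∀ h : (i : ℕ) + 1 < n, f ⟨(i : ℕ) + 1, h⟩ ≤ f i)
    (h2 : ∀ i : Fin n, ∀ h : (i : ℕ) + 1 < n,
      (i : ℕ) ∈ gapSet n \ Des2 σ⁻¹ → f ⟨(i : ℕ) + 1, h⟩ < f i) :
    cdesc (wOf σ f) = cdesc ⇑σ := by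
  have hrvbij : Function.Bijective (rv n : Fin n → Fin n) :=
    (Finite.injective_iff_bijective).mp rv_injective
  have hscbij : Function.Bijective (sc : Fin n → Fin n) :=
    (Finite.injective_iff_bijective).mp sc_injective
  set w := wOf σ f with hw
  symm
  unfold cdesc
  apply Finset.card_equiv ((Equiv.ofBijective _ hscbij).trans (Equiv.ofBijective _ hrvbij))
  intro i
  simp only [Finset.mem_filter, Finset.mem_univ, true_and, Equiv.trans_apply,
    Equiv.ofBijective_apply]
  have hmk : ∀ j : Fin n, (⟨((j : ℕ) + 1) % n, Nat.mod_lt _ j.pos⟩ : Fin n) = sc j :=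
    fun j => rfl
  rw [hmk i, hmk (rv n (sc i)), sc_rv_sc]
  have e1 : w (rv n (sc i)) = f (σ (sc i)) := wOf_rv σ f (sc i)
  have e2 : w (rv n i) = f (σ i) := wOf_rv σ f i
  rw [e1, e2]
  constructor
  · intro h
    have hle : f (σ i) ≤ f (σ (sc i)) := WDchain h1 (σ (sc i)) (σ i) (le_of_lt h)
    rcases lt_or_eq_of_le hle with hlt | heqv
    · exact hlt
    · exfalso
      have := chain2 h1 h2 (σ (sc i)) (σ i) h heqv.symm
      rw [Equiv.Perm.coe_inv, Equiv.symm_apply_apply, Equiv.symm_apply_apply] at this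
      rcases sc_val i with ⟨hv, _⟩ | ⟨hv, _⟩ <;> omega
  · intro h
    by_contra hcon
    push_neg at hcon
    have : f (σ (sc i)) ≤ f (σ i) := WDchain h1 (σ i) (σ (sc i)) hcon
    omega

lemma stdE_comp {σ : Equiv.Perm (Fin n)} {f : Fin n → Fin k}
    (h1 : ∀ i : Fin n, ∀ h : (i : ℕ) + 1 < n, f ⟨(i : ℕ) + 1, h⟩ ≤ f i)
    (h2 : ∀ i : Fin n, ∀ h : (i : ℕ) + 1 < n,
      (i : ℕ) ∈ gapSet n \ Des2 σ⁻¹ → f ⟨(i : ℕ) + 1, h⟩ < f i) :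
    stdE (f ∘ ⇑σ) = σ := by
  apply stdE_eq_of
  intro i j
  rw [key_lt_iff]
  simp only [Function.comp_apply]
  constructor
  · rintro (hflt | ⟨hfeq, hij⟩)
    · by_contra hcon
      push_neg at hcon
      have : f (σ j) ≤ f (σ i) := WDchain h1 (σ i) (σ j) hcon
      omega
    · rcases lt_trichotomy (σ i) (σ j) with hc | hc | hc
      · exfalso
        have := chain2 h1 h2 (σ i) (σ j) hc hfeq
        rw [Equiv.Perm.coe_inv, Equiv.symm_apply_apply, Equiv.symm_apply_apply] at this
        rw [Fin.lt_def] at hij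
        omega
      · exfalso
        have := σ.injective hc
        rw [this] at hij
        exact lt_irrefl _ hij
      · exact hc
  · intro h
    have hle : f (σ i) ≤ f (σ j) := WDchain h1 (σ j) (σ i) (le_of_lt h)
    rcases lt_or_eq_of_le hle with hlt | heqv
    · exact Or.inl hlt
    · right
      refine ⟨heqv, ?_⟩
      have := chain2 h1 h2 (σ j) (σ i) h heqv.symm
      rw [Equiv.Perm.coe_inv, Equiv.symm_apply_apply, Equiv.symm_apply_apply] at this
      rw [Fin.lt_def]
      omega


/-- the reversed word -/
def uOf (n : ℕ) (w : Fin n → Fin k) : Fin n → Fin k := fun j => w (rv n j)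

lemma uOf_smirnov {w : Fin n → Fin k} (hw : IsSmirnov w) (j : Fin n)
    (h : (j : ℕ) + 1 < n) : uOf n w ⟨(j : ℕ) + 1, h⟩ ≠ uOf n w j := by
  have hj2 := j.2
  have hplt : (n - 2 - (j : ℕ)) + 1 < n := by omega
  set p : Fin n := ⟨n - 2 - (j : ℕ), by omega⟩ with hp
  have hs := hw p (by show (p : ℕ) + 1 < n; exact hplt)
  have e1 : (⟨(p : ℕ) + 1, hplt⟩ : Fin n) = rv n j := by ext; simp [hp, rv]; omega
  have e2 : p = rv n ⟨(j : ℕ) + 1, h⟩ := by ext; simp [hp, rv]; omega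
  rw [e1, e2] at hs
  exact hs.symm

/-- the `f` of the backward map -/
def fOf (w : Fin n → Fin k) : Fin n → Fin k :=
  fun r => uOf n w ((stdE (uOf n w))⁻¹ r)

lemma fOf_cond1 {w : Fin n → Fin k} (_hw : IsSmirnov w) (i : Fin n)
    (h : (i : ℕ) + 1 < n) : fOf w ⟨(i : ℕ) + 1, h⟩ ≤ fOf w i := by
  set u := uOf n w with hu
  set j : Fin n := (stdE u)⁻¹ ⟨(i : ℕ) + 1, h⟩ with hj
  set i' : Fin n := (stdE u)⁻¹ i with hi'
  have hlt : stdF u i' < stdF u j := by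
    show stdE u i' < stdE u j
    rw [hj, hi', Equiv.Perm.coe_inv, Equiv.apply_symm_apply, Equiv.apply_symm_apply]
    rw [Fin.lt_def]
    simp
  rw [stdF_lt_iff, key_lt_iff] at hlt
  show u j ≤ u i'
  rcases hlt with hc | ⟨hc, _⟩
  · exact le_of_lt hc
  · exact le_of_eq hc

lemma fOf_cond2 {w : Fin n → Fin k} (hw : IsSmirnov w) (i : Fin n)
    (h : (i : ℕ) + 1 < n) (hmem : (i : ℕ) ∈ gapSet n \ Des2 (stdE (uOf n w))⁻¹) :
    fOf w ⟨(i : ℕ) + 1, h⟩ < fOf w i := by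
  set u := uOf n w with hu
  set j : Fin n := (stdE u)⁻¹ ⟨(i : ℕ) + 1, h⟩ with hj
  set i' : Fin n := (stdE u)⁻¹ i with hi'
  have hlt : stdF u i' < stdF u j := by
    show stdE u i' < stdE u j
    rw [hj, hi', Equiv.Perm.coe_inv, Equiv.apply_symm_apply, Equiv.apply_symm_apply]
    rw [Fin.lt_def]
    simp
  rw [stdF_lt_iff, key_lt_iff] at hlt
  show u j < u i'
  rcases hlt with hc | ⟨hc, hji⟩
  · exact hc
  · exfalso
    -- u j = u i' and j < i' : then j + 2 ≤ i' would put i in Des2, contradiction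
    have hji' : (j : ℕ) < (i' : ℕ) := hji
    have hne2 : (i' : ℕ) ≠ (j : ℕ) + 1 := by
      intro hadj
      have hadj' : (j : ℕ) + 1 < n := by rw [← hadj]; exact i'.2
      have := uOf_smirnov hw j hadj'
      have heq : (⟨(j : ℕ) + 1, hadj'⟩ : Fin n) = i' := by ext; simp; omega
      rw [heq] at this
      exact this hc.symm
    have hge2 : (j : ℕ) + 2 ≤ (i' : ℕ) := by omega
    rw [Finset.mem_sdiff] at hmem
    apply hmem.2
    rw [Des2, Finset.mem_filter]
    refine ⟨Finset.mem_range.mpr (by omega), h, ?_⟩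
    have e1 : ((stdE u)⁻¹ (⟨(i : ℕ) + 1, h⟩ : Fin n) : ℕ) = (j : ℕ) := by rw [← hj]
    have e2 : ((stdE u)⁻¹ (⟨(i : ℕ), Nat.lt_of_succ_lt h⟩ : Fin n) : ℕ) = (i' : ℕ) := by
      rw [hi']
    omega

lemma wOf_fOf {w : Fin n → Fin k} : wOf (stdE (uOf n w)) (fOf w) = w := by
  funext i
  show fOf w (stdE (uOf n w) (rv n i)) = w i
  rw [fOf, Equiv.Perm.coe_inv, Equiv.symm_apply_apply]
  show w (rv n (rv n i)) = w i
  rw [rv_rv]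

lemma uOf_wOf (σ : Equiv.Perm (Fin n)) (f : Fin n → Fin k) :
    uOf n (wOf σ f) = f ∘ ⇑σ := by
  funext j
  exact wOf_rv σ f j

lemma stdE_roundtrip {σ : Equiv.Perm (Fin n)} {f : Fin n → Fin k}
    (h1 : ∀ i : Fin n, ∀ h : (i : ℕ) + 1 < n, f ⟨(i : ℕ) + 1, h⟩ ≤ f i)
    (h2 : ∀ i : Fin n, ∀ h : (i : ℕ) + 1 < n,
      (i : ℕ) ∈ gapSet n \ Des2 σ⁻¹ → f ⟨(i : ℕ) + 1, h⟩ < f i) :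
    stdE (uOf n (wOf σ f)) = σ := by
  rw [uOf_wOf]
  exact stdE_comp h1 h2

lemma fOf_roundtrip {σ : Equiv.Perm (Fin n)} {f : Fin n → Fin k}
    (h1 : ∀ i : Fin n, ∀ h : (i : ℕ) + 1 < n, f ⟨(i : ℕ) + 1, h⟩ ≤ f i)
    (h2 : ∀ i : Fin n, ∀ h : (i : ℕ) + 1 < n,
      (i : ℕ) ∈ gapSet n \ Des2 σ⁻¹ → f ⟨(i : ℕ) + 1, h⟩ < f i) :
    fOf (wOf σ f) = f := by
  funext r
  rw [fOf, stdE_roundtrip h1 h2, uOf_wOf]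
  show f (σ (σ⁻¹ r)) = f r
  rw [Equiv.Perm.coe_inv, Equiv.apply_symm_apply]


lemma xw_wOf (σ : Equiv.Perm (Fin n)) (f : Fin n → Fin k) :
    (∏ i, MvPolynomial.X (wOf σ f i) : MvPolynomial (Fin k) ℤ) = ∏ i, MvPolynomial.X (f i) := by
  have hrvbij : Function.Bijective (rv n : Fin n → Fin n) :=
    (Finite.injective_iff_bijective).mp rv_injective
  exact Equiv.prod_comp ((Equiv.ofBijective _ hrvbij).trans σ) (fun j => MvPolynomial.X (f j))

end SmirnovAux

open SmirnovAux in
/-- `W̃_n = Σ_{σ ∈ S_n} t^{cdes σ} F_{n, [n-1]∖Des_{≥2}(σ⁻¹)}`. -/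
theorem cyclic_smirnov_fundamental_expansion (n k : ℕ) (hn : 1 ≤ n) (hk : 1 ≤ k) :
    smirnovEnum ℤ n k cdesc (fun _ => True) =
      ∑ σ : Equiv.Perm (Fin n),
        Polynomial.X ^ cdesc ⇑σ * Polynomial.C (FQ ℤ k n (gapSet n \ Des2 σ⁻¹)) := by
  simp only [FQ, map_sum, Finset.mul_sum]
  refine Eq.trans ?_ (Finset.sum_sigma _ _
    (fun p : Σ _ : Equiv.Perm (Fin n), (Fin n → Fin k) => Polynomial.X ^ cdesc ⇑p.1 *
      Polynomial.C (∏ i, MvPolynomial.X (p.2 i) : MvPolynomial (Fin k) ℤ)))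
  rw [smirnovEnum]
  refine Finset.sum_nbij' (fun w => ⟨stdE (uOf n w), fOf w⟩)
    (fun p => wOf p.1 p.2) ?_ ?_ ?_ ?_ ?_
  · -- forward mapsTo
    intro w hw
    simp only [Finset.mem_filter, Finset.mem_univ, true_and] at hw
    have hsm : IsSmirnov w := hw.1
    simp only [Finset.mem_sigma, Finset.mem_filter, Finset.mem_univ, true_and]
    exact ⟨fOf_cond1 hsm, fOf_cond2 hsm⟩
  · -- backward mapsTo
    rintro ⟨σ, f⟩ hp
    simp only [Finset.mem_sigma, Finset.mem_filter, Finset.mem_univ, true_and] at hp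
    obtain ⟨h1, h2⟩ := hp
    simp only [Finset.mem_filter, Finset.mem_univ, true_and]
    exact ⟨smirnov_wOf h1 h2, trivial⟩
  · -- left inverse
    intro w _
    exact wOf_fOf
  · -- right inverse
    rintro ⟨σ, f⟩ hp
    simp only [Finset.mem_sigma, Finset.mem_filter, Finset.mem_univ, true_and] at hp
    obtain ⟨h1, h2⟩ := hp
    have e1 := stdE_roundtrip h1 h2
    have e2 := fOf_roundtrip h1 h2
    simp only [e1, e2]
  · -- value equality
    intro w hw
    simp only [Finset.mem_filter, Finset.mem_univ, true_and] at hw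
    have hsm : IsSmirnov w := hw.1
    have h1 := fOf_cond1 hsm
    have h2 := fOf_cond2 hsm
    have hcd : cdesc (wOf (stdE (uOf n w)) (fOf w)) = cdesc ⇑(stdE (uOf n w)) :=
      cdesc_wOf h1 h2
    rw [wOf_fOf] at hcd
    have hxw : (∏ i, MvPolynomial.X (wOf (stdE (uOf n w)) (fOf w) i)
        : MvPolynomial (Fin k) ℤ) = ∏ i, MvPolynomial.X (fOf w i) :=
      xw_wOf (stdE (uOf n w)) (fOf w)
    rw [wOf_fOf] at hxw
    rw [hcd, xw]
    rw [hxw]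

end
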